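/- Sub-Gaussian intrinsic-metric bound for the influence-function process: Suppose in addition that |Y| ≤ M < ∞ almost surely. Then there exists a constant C < ∞, depending only on M, K₀, and K₁, such that for all s ≤ t in ℝ, E[(D*_t(Y, A, W) − D*_s(Y, A, W))²] ≤ C·(F₀(t) − F₀(s)). -/

import Mathlib

open MeasureTheory Set Filter

/-- Indicator `1{a ≤ a₀}`. -/
noncomputable def indLe (a₀ a : ℝ) : ℝ := if a ≤ a₀ then 1 else 0

/-- Cumulative distribution function of `F₀`. -/
noncomputable def cdf0 (F₀ : Measure ℝ) (a : ℝ) : ℝ := (F₀ (Iic a)).toReal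

/-- `θ_μ(a) := ∫ μ(a,w) dQ₀(w)`. -/
noncomputable def thetaMu {𝒲 : Type*} [MeasurableSpace 𝒲] (Q₀ : Measure 𝒲)
    (μ : ℝ → 𝒲 → ℝ) (a : ℝ) : ℝ := ∫ w, μ a w ∂Q₀

/-- `γ_μ := ∬ μ(a,w) dF₀(a) dQ₀(w)`. -/
noncomputable def gammaMu {𝒲 : Type*} [MeasurableSpace 𝒲] (F₀ : Measure ℝ) (Q₀ : Measure 𝒲)
    (μ : ℝ → 𝒲 → ℝ) : ℝ := ∫ a, ∫ w, μ a w ∂Q₀ ∂F₀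

/-- `Ω_μ(a₀) := ∬ [1{a ≤ a₀} − F₀(a₀)] μ(a,w) dF₀(a) dQ₀(w)`. -/
noncomputable def OmegaMu {𝒲 : Type*} [MeasurableSpace 𝒲] (F₀ : Measure ℝ) (Q₀ : Measure 𝒲)
    (μ : ℝ → 𝒲 → ℝ) (a₀ : ℝ) : ℝ :=
  ∫ a, ∫ w, (indLe a₀ a - cdf0 F₀ a₀) * μ a w ∂Q₀ ∂F₀

/-- The one-step functional `D_{a₀,μ,g}(y,a,w)`. -/
noncomputable def Dfun {𝒲 : Type*} [MeasurableSpace 𝒲] (F₀ : Measure ℝ) (Q₀ : Measure 𝒲)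
    (μ g : ℝ → 𝒲 → ℝ) (a₀ y a : ℝ) (w : 𝒲) : ℝ :=
  (indLe a₀ a - cdf0 F₀ a₀) * ((y - μ a w) / g a w + thetaMu Q₀ μ a - gammaMu F₀ Q₀ μ)
    + (∫ u, (indLe a₀ u - cdf0 F₀ a₀) * μ u w ∂F₀) - OmegaMu F₀ Q₀ μ a₀

/-- The efficient influence function `D*_{a₀}(y,a,w)`. -/
noncomputable def Dstar {𝒲 : Type*} [MeasurableSpace 𝒲] (F₀ : Measure ℝ) (Q₀ : Measure 𝒲)
    (μ₀ g₀ : ℝ → 𝒲 → ℝ) (a₀ y a : ℝ) (w : 𝒲) : ℝ :=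
  (indLe a₀ a - cdf0 F₀ a₀) *
      ((y - μ₀ a w) / g₀ a w + thetaMu Q₀ μ₀ a - gammaMu F₀ Q₀ μ₀)
    + (∫ u, (indLe a₀ u - cdf0 F₀ a₀) * μ₀ u w ∂F₀) - 2 * OmegaMu F₀ Q₀ μ₀ a₀

lemma indLe_nonneg (a₀ a : ℝ) : 0 ≤ indLe a₀ a := by unfold indLe; split_ifs <;> norm_num

lemma indLe_le_one (a₀ a : ℝ) : indLe a₀ a ≤ 1 := by unfold indLe; split_ifs <;> norm_num

lemma indLe_mono {s t : ℝ} (hst : s ≤ t) (a : ℝ) : indLe s a ≤ indLe t a := by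
  unfold indLe; split_ifs with h1 h2 <;> try norm_num
  exact absurd (h1.trans hst) h2

lemma indLe_diff_mem {s t : ℝ} (hst : s ≤ t) (a : ℝ) :
    indLe t a - indLe s a = 0 ∨ indLe t a - indLe s a = 1 := by
  unfold indLe; split_ifs with h1 h2 h2 <;> norm_num
  exact absurd (h2.trans hst) h1

lemma measurable_indLe (a₀ : ℝ) : Measurable (indLe a₀) := by
  unfold indLe
  exact Measurable.ite measurableSet_Iic measurable_const measurable_const

lemma cdf0_nonneg (F₀ : Measure ℝ) (a : ℝ) : 0 ≤ cdf0 F₀ a := ENNReal.toReal_nonneg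

lemma cdf0_le_one (F₀ : Measure ℝ) [IsProbabilityMeasure F₀] (a : ℝ) : cdf0 F₀ a ≤ 1 := by
  unfold cdf0
  refine ENNReal.toReal_le_of_le_ofReal zero_le_one ?_
  simpa using prob_le_one (μ := F₀) (s := Iic a)

lemma cdf0_mono (F₀ : Measure ℝ) [IsProbabilityMeasure F₀] {s t : ℝ} (hst : s ≤ t) :
    cdf0 F₀ s ≤ cdf0 F₀ t :=
  ENNReal.toReal_mono (measure_ne_top _ _) (measure_mono (Iic_subset_Iic.mpr hst))

lemma integral_indLe (F₀ : Measure ℝ) [IsProbabilityMeasure F₀] (a₀ : ℝ) :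
    ∫ a, indLe a₀ a ∂F₀ = cdf0 F₀ a₀ := by
  have h : (fun a => indLe a₀ a) = (Iic a₀).indicator (fun _ => (1 : ℝ)) := by
    funext a; simp [indLe, Set.indicator_apply, mem_Iic]
  rw [h, integral_indicator_const (1 : ℝ) measurableSet_Iic]
  simp [cdf0, measureReal_def]

lemma integrable_indLe (F₀ : Measure ℝ) [IsProbabilityMeasure F₀] (a₀ : ℝ) :
    Integrable (indLe a₀) F₀ := by
  refine (integrable_const (1:ℝ)).mono' (measurable_indLe a₀).aestronglyMeasurable ?_
  refine Eventually.of_forall fun a => ?_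
  rw [Real.norm_eq_abs, abs_of_nonneg (indLe_nonneg _ _)]
  exact indLe_le_one _ _

lemma abs_indLe_sub_cdf0_le_one (F₀ : Measure ℝ) [IsProbabilityMeasure F₀] (a₀ a : ℝ) :
    |indLe a₀ a - cdf0 F₀ a₀| ≤ 1 := by
  have h1 := indLe_nonneg a₀ a
  have h2 := indLe_le_one a₀ a
  have h3 := cdf0_nonneg F₀ a₀
  have h4 := cdf0_le_one F₀ a₀
  rw [abs_le]; constructor <;> linarith

/-- Key bound: difference of weighted integrals against a bounded function. -/
lemma key_diff_bound (F₀ : Measure ℝ) [IsProbabilityMeasure F₀]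
    {s t : ℝ} (hst : s ≤ t) {K : ℝ} (hK : 0 ≤ K) {φ : ℝ → ℝ}
    (hφm : AEStronglyMeasurable φ F₀) (hφ : ∀ a, |φ a| ≤ K) :
    |(∫ a, (indLe t a - cdf0 F₀ t) * φ a ∂F₀) - ∫ a, (indLe s a - cdf0 F₀ s) * φ a ∂F₀|
      ≤ 2 * K * (cdf0 F₀ t - cdf0 F₀ s) := by
  set d : ℝ := cdf0 F₀ t - cdf0 F₀ s with hd
  have hd0 : 0 ≤ d := sub_nonneg.mpr (cdf0_mono F₀ hst)
  have hint : ∀ a₀ : ℝ, Integrable (fun a => (indLe a₀ a - cdf0 F₀ a₀) * φ a) F₀ := by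
    intro a₀
    refine (integrable_const K).mono'
      ((((measurable_indLe a₀).sub measurable_const).aestronglyMeasurable).mul hφm) ?_
    refine Eventually.of_forall fun a => ?_
    rw [Real.norm_eq_abs, abs_mul]
    calc |indLe a₀ a - cdf0 F₀ a₀| * |φ a| ≤ 1 * K :=
          mul_le_mul (abs_indLe_sub_cdf0_le_one F₀ a₀ a) (hφ a) (abs_nonneg _) zero_le_one
      _ = K := one_mul K
  rw [← integral_sub (hint t) (hint s)]
  have heq : (fun a => (indLe t a - cdf0 F₀ t) * φ a - (indLe s a - cdf0 F₀ s) * φ a)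
      = fun a => (indLe t a - indLe s a - d) * φ a := by
    funext a; rw [hd]; ring
  rw [heq]
  have hgint : Integrable (fun a => (indLe t a - indLe s a + d) * K) F₀ := by
    exact (((integrable_indLe F₀ t).sub (integrable_indLe F₀ s)).add
      (integrable_const d)).mul_const K
  have hsub : Integrable (fun a => indLe t a - indLe s a) F₀ :=
    (integrable_indLe F₀ t).sub (integrable_indLe F₀ s)
  have h1 : |∫ a, (indLe t a - indLe s a - d) * φ a ∂F₀|
      ≤ ∫ a, ‖(indLe t a - indLe s a - d) * φ a‖ ∂F₀ := by
    rw [← Real.norm_eq_abs]; exact norm_integral_le_integral_norm _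
  have h2 : ∫ a, ‖(indLe t a - indLe s a - d) * φ a‖ ∂F₀
      ≤ ∫ a, (indLe t a - indLe s a + d) * K ∂F₀ := by
    refine integral_mono_of_nonneg (Eventually.of_forall fun a => norm_nonneg _) hgint
      (Eventually.of_forall fun a => ?_)
    have hx0 : 0 ≤ indLe t a - indLe s a := sub_nonneg.mpr (indLe_mono hst a)
    show ‖(indLe t a - indLe s a - d) * φ a‖ ≤ (indLe t a - indLe s a + d) * K
    rw [Real.norm_eq_abs, abs_mul]
    refine mul_le_mul ?_ (hφ a) (abs_nonneg _) (by linarith)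
    calc |indLe t a - indLe s a - d| ≤ |indLe t a - indLe s a| + |d| := abs_sub _ _
      _ = indLe t a - indLe s a + d := by rw [abs_of_nonneg hx0, abs_of_nonneg hd0]
  have h3 : ∫ a, (indLe t a - indLe s a + d) * K ∂F₀ = 2 * K * d := by
    rw [integral_mul_const, integral_add hsub (integrable_const d),
      integral_sub (integrable_indLe F₀ t) (integrable_indLe F₀ s),
      integral_indLe, integral_indLe, integral_const]
    simp [hd]; ring
  linarith

lemma sq_bound_aux {b v x d : ℝ} (hb : 0 ≤ b) (hv : 0 ≤ v) (hx : x ^ 2 = x) :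
    (b * x + v * d) ^ 2 ≤ 2 * b ^ 2 * x + 2 * v ^ 2 * d ^ 2 := by
  nlinarith [sq_nonneg (b * x - v * d), sq_nonneg b, sq_nonneg v, hx]

lemma final_aux {b v d : ℝ} (hd0 : 0 ≤ d) (hd1 : d ≤ 1) :
    2 * b ^ 2 * d + 2 * v ^ 2 * d ^ 2 ≤ (2 * b ^ 2 + 2 * v ^ 2) * d := by
  nlinarith [sq_nonneg v, mul_nonneg hd0 (sub_nonneg.mpr hd1)]

/-- Sub-Gaussian intrinsic-metric bound for the influence-function process. -/
theorem eif_process_subgaussian_bound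
    {Ωs 𝒲 : Type*} [MeasurableSpace Ωs] [MeasurableSpace 𝒲]
    (P : Measure Ωs) [IsProbabilityMeasure P]
    (Y A : Ωs → ℝ) (W : Ωs → 𝒲) (hY : Measurable Y) (hA : Measurable A) (hW : Measurable W)
    (F₀ : Measure ℝ) [IsProbabilityMeasure F₀] (Q₀ : Measure 𝒲) [IsProbabilityMeasure Q₀]
    (hAlaw : Measure.map A P = F₀) (hWlaw : Measure.map W P = Q₀)
    (K₀ K₁ K₂ : ℝ) (hK₀ : 0 ≤ K₀) (hK₁ : 0 < K₁) (hK₁₂ : K₁ ≤ K₂)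
    (g₀ : ℝ → 𝒲 → ℝ) (hg₀m : Measurable (Function.uncurry g₀))
    (hjoint : Measure.map (fun ω => (A ω, W ω)) P
      = (F₀.prod Q₀).withDensity (fun q => ENNReal.ofReal (g₀ q.1 q.2)))
    (hg₀bd : ∀ᵐ q ∂(F₀.prod Q₀), K₁ ≤ g₀ q.1 q.2 ∧ g₀ q.1 q.2 ≤ K₂)
    (μ₀ : ℝ → 𝒲 → ℝ) (hμ₀m : Measurable (Function.uncurry μ₀))
    (hμ₀bd : ∀ a w, |μ₀ a w| ≤ K₀)
    (hcond : MeasureTheory.condExp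
        (MeasurableSpace.comap (fun ω => (A ω, W ω)) inferInstance) P Y
      =ᵐ[P] fun ω => μ₀ (A ω) (W ω))
    (M : ℝ) (hM : ∀ᵐ ω ∂P, |Y ω| ≤ M) :
    ∃ C : ℝ, ∀ s t : ℝ, s ≤ t →
      ∫ ω, (Dstar F₀ Q₀ μ₀ g₀ t (Y ω) (A ω) (W ω)
          - Dstar F₀ Q₀ μ₀ g₀ s (Y ω) (A ω) (W ω)) ^ 2 ∂P
        ≤ C * (cdf0 F₀ t - cdf0 F₀ s) := by
  haveI : (MeasureTheory.ae P).NeBot := ae_neBot.mpr (IsProbabilityMeasure.ne_zero P)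
  have hMnn : 0 ≤ M := by
    obtain ⟨ω, hω⟩ := hM.exists
    exact le_trans (abs_nonneg _) hω
  set B : ℝ := (M + K₀) / K₁ + 2 * K₀ with hB
  have hB0 : 0 ≤ B := by positivity
  refine ⟨2 * B ^ 2 + 2 * (B + 6 * K₀) ^ 2, fun s t hst => ?_⟩
  set d : ℝ := cdf0 F₀ t - cdf0 F₀ s with hd
  have hd0 : 0 ≤ d := sub_nonneg.mpr (cdf0_mono F₀ hst)
  have hd1 : d ≤ 1 := by
    have h1 := cdf0_le_one F₀ t
    have h2 := cdf0_nonneg F₀ s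
    rw [hd]; linarith
  -- theta bounds
  have hθm : StronglyMeasurable (thetaMu Q₀ μ₀) :=
    hμ₀m.stronglyMeasurable.integral_prod_right
  have hθbd : ∀ a, |thetaMu Q₀ μ₀ a| ≤ K₀ := by
    intro a
    rw [← Real.norm_eq_abs]
    calc ‖∫ w, μ₀ a w ∂Q₀‖ ≤ K₀ * (Q₀ univ).toReal :=
          norm_integral_le_of_norm_le_const
            (Eventually.of_forall fun w => by simpa [Real.norm_eq_abs] using hμ₀bd a w)
      _ = K₀ := by simp
  have hγbd : |gammaMu F₀ Q₀ μ₀| ≤ K₀ := by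
    rw [← Real.norm_eq_abs]
    calc ‖∫ a, ∫ w, μ₀ a w ∂Q₀ ∂F₀‖ ≤ K₀ * (F₀ univ).toReal :=
          norm_integral_le_of_norm_le_const
            (Eventually.of_forall fun a => by
              simpa [Real.norm_eq_abs, thetaMu] using hθbd a)
      _ = K₀ := by simp
  -- Omega rewrite and bounds
  have hΩeq : ∀ a₀, OmegaMu F₀ Q₀ μ₀ a₀
      = ∫ a, (indLe a₀ a - cdf0 F₀ a₀) * thetaMu Q₀ μ₀ a ∂F₀ := by
    intro a₀
    unfold OmegaMu thetaMu
    congr 1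
    funext a
    exact integral_const_mul _ _
  have hΩ : |OmegaMu F₀ Q₀ μ₀ t - OmegaMu F₀ Q₀ μ₀ s| ≤ 2 * K₀ * d := by
    rw [hΩeq, hΩeq]
    exact key_diff_bound F₀ hst hK₀ hθm.aestronglyMeasurable hθbd
  have hJ : ∀ w, |(∫ u, (indLe t u - cdf0 F₀ t) * μ₀ u w ∂F₀)
      - ∫ u, (indLe s u - cdf0 F₀ s) * μ₀ u w ∂F₀| ≤ 2 * K₀ * d := fun w =>
    key_diff_bound F₀ hst hK₀
      (hμ₀m.comp (measurable_id.prodMk measurable_const)).aestronglyMeasurable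
      (fun u => hμ₀bd u w)
  -- density lower bound a.e. P
  have hg : ∀ᵐ ω ∂P, K₁ ≤ g₀ (A ω) (W ω) := by
    have hS : MeasurableSet {q : ℝ × 𝒲 | K₁ ≤ g₀ q.1 q.2} :=
      measurableSet_le measurable_const hg₀m
    have hae : ∀ᵐ q ∂(Measure.map (fun ω => (A ω, W ω)) P), K₁ ≤ g₀ q.1 q.2 := by
      rw [hjoint]
      exact (withDensity_absolutelyContinuous _ _).ae_le (hg₀bd.mono fun q hq => hq.1)
    exact (ae_map_iff (hA.prodMk hW).aemeasurable hS).mp hae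
  -- pointwise bound
  have hpt : ∀ᵐ ω ∂P,
      (Dstar F₀ Q₀ μ₀ g₀ t (Y ω) (A ω) (W ω)
          - Dstar F₀ Q₀ μ₀ g₀ s (Y ω) (A ω) (W ω)) ^ 2
        ≤ 2 * B ^ 2 * (indLe t (A ω) - indLe s (A ω)) + 2 * (B + 6 * K₀) ^ 2 * d ^ 2 := by
    filter_upwards [hM, hg] with ω hYω hgω
    set a := A ω
    set w := W ω
    set y := Y ω
    have hg0 : 0 < g₀ a w := lt_of_lt_of_le hK₁ hgω
    have hymu : |y - μ₀ a w| ≤ M + K₀ :=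
      (abs_sub y (μ₀ a w)).trans (add_le_add hYω (hμ₀bd a w))
    have hdivle : |(y - μ₀ a w) / g₀ a w| ≤ (M + K₀) / K₁ := by
      rw [abs_div, abs_of_pos hg0]
      exact div_le_div₀ (by positivity) hymu hK₁ hgω
    have hh : |(y - μ₀ a w) / g₀ a w + thetaMu Q₀ μ₀ a - gammaMu F₀ Q₀ μ₀| ≤ B := by
      have h1 := hθbd a
      calc |(y - μ₀ a w) / g₀ a w + thetaMu Q₀ μ₀ a - gammaMu F₀ Q₀ μ₀|
          ≤ |(y - μ₀ a w) / g₀ a w + thetaMu Q₀ μ₀ a| + |gammaMu F₀ Q₀ μ₀| := abs_sub _ _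
        _ ≤ |(y - μ₀ a w) / g₀ a w| + |thetaMu Q₀ μ₀ a| + |gammaMu F₀ Q₀ μ₀| := by
            have := abs_add_le ((y - μ₀ a w) / g₀ a w) (thetaMu Q₀ μ₀ a)
            linarith
        _ ≤ B := by rw [hB]; linarith
    set x : ℝ := indLe t a - indLe s a with hx
    have hx0 : 0 ≤ x := sub_nonneg.mpr (indLe_mono hst a)
    have hxx : x ^ 2 = x := by
      rcases indLe_diff_mem hst a with h | h <;> rw [hx, h] <;> ring
    have hdiff : Dstar F₀ Q₀ μ₀ g₀ t y a w - Dstar F₀ Q₀ μ₀ g₀ s y a w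
        = (x - d) * ((y - μ₀ a w) / g₀ a w + thetaMu Q₀ μ₀ a - gammaMu F₀ Q₀ μ₀)
          + ((∫ u, (indLe t u - cdf0 F₀ t) * μ₀ u w ∂F₀)
              - ∫ u, (indLe s u - cdf0 F₀ s) * μ₀ u w ∂F₀)
          - 2 * (OmegaMu F₀ Q₀ μ₀ t - OmegaMu F₀ Q₀ μ₀ s) := by
      simp only [Dstar, hx, hd]; ring
    have habs : |Dstar F₀ Q₀ μ₀ g₀ t y a w - Dstar F₀ Q₀ μ₀ g₀ s y a w|
        ≤ B * x + (B + 6 * K₀) * d := by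
      rw [hdiff]
      have h1 : |(x - d) * ((y - μ₀ a w) / g₀ a w + thetaMu Q₀ μ₀ a - gammaMu F₀ Q₀ μ₀)|
          ≤ (x + d) * B := by
        rw [abs_mul]
        refine mul_le_mul ?_ hh (abs_nonneg _) (by linarith)
        calc |x - d| ≤ |x| + |d| := abs_sub _ _
          _ = x + d := by rw [abs_of_nonneg hx0, abs_of_nonneg hd0]
      have h2 := hJ w
      have h3 := abs_sub
        ((x - d) * ((y - μ₀ a w) / g₀ a w + thetaMu Q₀ μ₀ a - gammaMu F₀ Q₀ μ₀)
          + ((∫ u, (indLe t u - cdf0 F₀ t) * μ₀ u w ∂F₀)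
              - ∫ u, (indLe s u - cdf0 F₀ s) * μ₀ u w ∂F₀))
        (2 * (OmegaMu F₀ Q₀ μ₀ t - OmegaMu F₀ Q₀ μ₀ s))
      have h4 := abs_add_le
        ((x - d) * ((y - μ₀ a w) / g₀ a w + thetaMu Q₀ μ₀ a - gammaMu F₀ Q₀ μ₀))
        ((∫ u, (indLe t u - cdf0 F₀ t) * μ₀ u w ∂F₀)
          - ∫ u, (indLe s u - cdf0 F₀ s) * μ₀ u w ∂F₀)
      have h5 : |2 * (OmegaMu F₀ Q₀ μ₀ t - OmegaMu F₀ Q₀ μ₀ s)| ≤ 2 * (2 * K₀ * d) := by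
        rw [abs_mul]
        simp only [abs_two]
        linarith [hΩ]
      nlinarith [h1, h2, h3, h4, h5]
    have hR0 : 0 ≤ B * x + (B + 6 * K₀) * d := by positivity
    have hsq : (Dstar F₀ Q₀ μ₀ g₀ t y a w - Dstar F₀ Q₀ μ₀ g₀ s y a w) ^ 2
        ≤ (B * x + (B + 6 * K₀) * d) ^ 2 := by
      obtain ⟨hl, hr⟩ := abs_le.mp habs
      exact sq_le_sq' hl hr
    exact hsq.trans (sq_bound_aux hB0 (by linarith) hxx)
  -- integrate
  have hxint : Integrable (fun ω => indLe t (A ω) - indLe s (A ω)) P := by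
    refine (integrable_const (1 : ℝ)).mono'
      (((measurable_indLe t).comp hA).sub ((measurable_indLe s).comp hA)).aestronglyMeasurable
      (Eventually.of_forall fun ω => ?_)
    rcases indLe_diff_mem hst (A ω) with h | h <;> rw [Real.norm_eq_abs, h] <;> norm_num
  have hGint : Integrable (fun ω =>
      2 * B ^ 2 * (indLe t (A ω) - indLe s (A ω)) + 2 * (B + 6 * K₀) ^ 2 * d ^ 2) P :=
    (hxint.const_mul _).add (integrable_const _)
  have hle := integral_mono_of_nonneg
    (Eventually.of_forall fun ω => sq_nonneg _) hGint hpt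
  have hcomp : ∀ a₀ : ℝ, ∫ ω, indLe a₀ (A ω) ∂P = cdf0 F₀ a₀ := by
    intro a₀
    rw [← integral_indLe F₀ a₀, ← hAlaw,
      integral_map hA.aemeasurable (measurable_indLe a₀).aestronglyMeasurable]
  have hGval : ∫ ω, (2 * B ^ 2 * (indLe t (A ω) - indLe s (A ω))
      + 2 * (B + 6 * K₀) ^ 2 * d ^ 2) ∂P
      = 2 * B ^ 2 * d + 2 * (B + 6 * K₀) ^ 2 * d ^ 2 := by
    have hindA : ∀ a₀ : ℝ, Integrable (fun ω => indLe a₀ (A ω)) P := by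
      intro a₀
      refine (integrable_const (1 : ℝ)).mono'
        ((measurable_indLe a₀).comp hA).aestronglyMeasurable
        (Eventually.of_forall fun ω => ?_)
      rw [Real.norm_eq_abs, abs_of_nonneg (indLe_nonneg _ _)]
      exact indLe_le_one _ _
    rw [integral_add (hxint.const_mul _) (integrable_const _), integral_const,
      integral_const_mul, integral_sub (hindA t) (hindA s), hcomp, hcomp]
    simp [hd]
  rw [hGval] at hle
  exact hle.trans (final_aux hd0 hd1)
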